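/- Let G be a graph, x ∈ V(G), and 2 ≤ k ≤ ν(G). Then the colon ideal (I(G)^{[k]} : x) equals ∑_{y ∈ N_G(x)} y · I(G \ {x,y})^{[k-1]} + I(G \ N_G[x])^{[k]}, where N_G(x) is the set of neighbors of x and N_G[x] = N_G(x) ∪ {x}. -/

import Mathlib

open MvPolynomial

noncomputable section

/-- The product of the two variables corresponding to the endpoints of an edge. -/
def edgeProd (K : Type*) [CommSemiring K] {V : Type*} (e : Sym2 V) : MvPolynomial V K :=
  Sym2.lift ⟨fun a b => X a * X b, fun a b => mul_comm _ _⟩ e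

/-- The edge ideal of a simple graph. -/
def edgeIdeal (K : Type*) [CommSemiring K] {V : Type*} (G : SimpleGraph V) :
    Ideal (MvPolynomial V K) :=
  Ideal.span {p | ∃ e ∈ G.edgeSet, p = edgeProd K e}

/-- A finite set of edges of `G` forming a matching (pairwise disjoint edges). -/
def IsMatchingSet {V : Type*} (G : SimpleGraph V) (M : Finset (Sym2 V)) : Prop :=
  (↑M : Set (Sym2 V)) ⊆ G.edgeSet ∧
    (↑M : Set (Sym2 V)).Pairwise fun e f => ∀ v, v ∈ e → v ∉ f

/-- The matching number of a graph: the maximum size of a matching. -/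
def matchingNumber {V : Type*} (G : SimpleGraph V) : ℕ :=
  sSup {k | ∃ M : Finset (Sym2 V), IsMatchingSet G M ∧ M.card = k}

/-- The ideal generated by the squarefree monomials `∏_{e ∈ M} x_e` over all
`k`-matchings `M` of `G`; this is the `k`-th squarefree (matching) power of the edge ideal. -/
def matchingPow (K : Type*) [CommSemiring K] {V : Type*} (G : SimpleGraph V) (k : ℕ) :
    Ideal (MvPolynomial V K) :=
  Ideal.span {p | ∃ M : Finset (Sym2 V), IsMatchingSet G M ∧ M.card = k ∧
    p = ∏ e ∈ M, edgeProd K e}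

/-- The `k`-th squarefree power of an ideal: the ideal generated by all squarefree
monomials belonging to `I ^ k`. -/
def sqfreePow {K V : Type*} [CommSemiring K] (I : Ideal (MvPolynomial V K)) (k : ℕ) :
    Ideal (MvPolynomial V K) :=
  Ideal.span {p | (∃ A : Finset V, p = ∏ v ∈ A, X v) ∧ p ∈ I ^ k}

/-- Deleting a set of vertices from a graph (keeping the ambient vertex type:
all edges meeting `W` are removed). -/
def delVerts {V : Type*} (G : SimpleGraph V) (W : Set V) : SimpleGraph V where
  Adj a b := G.Adj a b ∧ a ∉ W ∧ b ∉ W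
  symm := ⟨fun a b h => ⟨h.1.symm, h.2.2, h.2.1⟩⟩
  loopless := ⟨fun a h => G.loopless.irrefl a h.1⟩

/-- The whisker graph `W(G)`: to each vertex `x` of `G` (viewed as `inl x`) one
attaches a new pendant vertex `inr x`. -/
def whiskerGraph {V : Type*} (G : SimpleGraph V) : SimpleGraph (V ⊕ V) :=
  SimpleGraph.fromRel fun a b =>
    (∃ u v, G.Adj u v ∧ a = Sum.inl u ∧ b = Sum.inl v) ∨ (∃ u, a = Sum.inl u ∧ b = Sum.inr u)

/-- The depth of `R/I` (w.r.t. the graded maximal ideal generated by the variables),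
defined as the supremum of lengths of `R/I`-regular sequences of elements of that ideal. -/
def quotDepth {K V : Type*} [Field K] (I : Ideal (MvPolynomial V K)) : ℕ :=
  sSup {n | ∃ rs : List (MvPolynomial V K), rs.length = n ∧
    (∀ r ∈ rs, r ∈ Ideal.span (Set.range (X : V → MvPolynomial V K))) ∧
    RingTheory.Sequence.IsRegular (MvPolynomial V K ⧸ I) rs}

/-- A finite graded free resolution of an ideal `I` of a polynomial ring, with
`rk i` the rank of the `i`-th free module and `deg i t` the degree (twist) of its
`t`-th basis element. -/
structure GradedFreeResolution {K V : Type*} [Field K] (I : Ideal (MvPolynomial V K)) where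
  rk : ℕ → ℕ
  deg : (i : ℕ) → Fin (rk i) → ℕ
  len : ℕ
  rk_eq_zero : ∀ i, len < i → rk i = 0
  aug : (Fin (rk 0) → MvPolynomial V K) →ₗ[MvPolynomial V K] MvPolynomial V K
  diff : (i : ℕ) →
    (Fin (rk (i + 1)) → MvPolynomial V K) →ₗ[MvPolynomial V K] (Fin (rk i) → MvPolynomial V K)
  aug_homogeneous : ∀ s : Fin (rk 0), (aug (Pi.single s 1)).IsHomogeneous (deg 0 s)
  diff_homogeneous : ∀ i (s : Fin (rk (i + 1))) (t : Fin (rk i)),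
    (diff i (Pi.single s 1) t).IsHomogeneous (deg (i + 1) s - deg i t) ∧
      (deg (i + 1) s < deg i t → diff i (Pi.single s 1) t = 0)
  range_aug : LinearMap.range aug = I
  exact_zero : LinearMap.ker aug = LinearMap.range (diff 0)
  exact_succ : ∀ i, LinearMap.ker (diff i) = LinearMap.range (diff (i + 1))

/-- The Castelnuovo–Mumford regularity of an ideal `I` of a polynomial ring: the least
`r` such that `I` admits a finite graded free resolution all of whose `i`-th twists are
at most `r + i`. -/
noncomputable def regCM {K V : Type*} [Field K] (I : Ideal (MvPolynomial V K)) : ℕ :=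
  sInf {r | ∃ F : GradedFreeResolution I, ∀ i (t : Fin (F.rk i)), F.deg i t ≤ r + i}

end

noncomputable section Helpers
open Pointwise

def eDeg {V : Type*} (e : Sym2 V) : V →₀ ℕ :=
  Sym2.lift ⟨fun a b => Finsupp.single a 1 + Finsupp.single b 1, fun a b => add_comm _ _⟩ e

lemma eDeg_mk {V : Type*} (a b : V) : eDeg s(a, b) = Finsupp.single a 1 + Finsupp.single b 1 :=
  Sym2.lift_mk _ a b

lemma edgeProd_eq {K : Type*} [CommSemiring K] {V : Type*} (e : Sym2 V) :
    edgeProd K e = monomial (eDeg e) (1 : K) := by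
  induction e using Sym2.ind with
  | _ a b =>
    rw [eDeg_mk, edgeProd, Sym2.lift_mk]
    simp only [X]
    rw [monomial_mul, one_mul]

lemma prod_edgeProd {K : Type*} [CommSemiring K] {V : Type*} (M : Finset (Sym2 V)) :
    ∏ e ∈ M, edgeProd K e = monomial (∑ e ∈ M, eDeg e) (1 : K) := by
  classical
  induction M using Finset.induction_on with
  | empty => simp [monomial_zero', C_1]
  | insert a s h ih =>
    rw [Finset.prod_insert h, Finset.sum_insert h, ih, edgeProd_eq, monomial_mul, one_mul]

lemma eDeg_apply_of_not_mem {V : Type*} {e : Sym2 V} {v : V} (h : v ∉ e) : eDeg e v = 0 := by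
  induction e using Sym2.ind with
  | _ a b =>
    rw [Sym2.mem_iff] at h
    push_neg at h
    rw [eDeg_mk]
    classical
    simp [Finsupp.single_apply, Ne.symm h.1, Ne.symm h.2, (fun hh => h.1 hh.symm : a ≠ v), (fun hh => h.2 hh.symm : b ≠ v)]

def matchDegs {V : Type*} (G : SimpleGraph V) (k : ℕ) : Set (V →₀ ℕ) :=
  {d | ∃ M : Finset (Sym2 V), IsMatchingSet G M ∧ M.card = k ∧ d = ∑ e ∈ M, eDeg e}

lemma matchingPow_eq_span (K : Type*) [CommSemiring K] {V : Type*} (G : SimpleGraph V) (k : ℕ) :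
    matchingPow K G k = Ideal.span ((fun s => monomial s (1 : K)) '' matchDegs G k) := by
  unfold matchingPow
  congr 1
  ext p
  constructor
  · rintro ⟨M, hM, hc, rfl⟩
    exact ⟨∑ e ∈ M, eDeg e, ⟨M, hM, hc, rfl⟩, (prod_edgeProd M).symm⟩
  · rintro ⟨d, ⟨M, hM, hc, rfl⟩, rfl⟩
    exact ⟨M, hM, hc, (prod_edgeProd M).symm⟩

lemma isMatchingSet_delVerts {V : Type*} {G : SimpleGraph V} {W : Set V} {M : Finset (Sym2 V)} :
    IsMatchingSet (delVerts G W) M ↔ IsMatchingSet G M ∧ ∀ e ∈ M, ∀ w ∈ e, w ∉ W := by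
  constructor
  · rintro ⟨hsub, hpw⟩
    refine ⟨⟨fun e he => ?_, hpw⟩, fun e he w hw => ?_⟩
    · have := hsub he
      induction e using Sym2.ind with
      | _ a b => exact (SimpleGraph.mem_edgeSet _).2 ((SimpleGraph.mem_edgeSet _).1 this).1
    · have := hsub he
      induction e using Sym2.ind with
      | _ a b =>
        have h2 := (SimpleGraph.mem_edgeSet _).1 this
        rcases Sym2.mem_iff.1 hw with rfl | rfl
        · exact h2.2.1
        · exact h2.2.2
  · rintro ⟨⟨hsub, hpw⟩, hW⟩
    refine ⟨fun e he => ?_, hpw⟩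
    have h1 := hsub he
    have h2 := hW e he
    induction e using Sym2.ind with
    | _ a b =>
      exact (SimpleGraph.mem_edgeSet _).2
        ⟨(SimpleGraph.mem_edgeSet _).1 h1, h2 a (Sym2.mem_mk_left a b), h2 b (Sym2.mem_mk_right a b)⟩

lemma IsMatchingSet.erase {V : Type*} [DecidableEq (Sym2 V)] {G : SimpleGraph V} {M : Finset (Sym2 V)}
    (h : IsMatchingSet G M) (e : Sym2 V) : IsMatchingSet G (M.erase e) := by
  refine ⟨fun f hf => h.1 (Finset.erase_subset _ _ hf), h.2.mono ?_⟩
  intro f hf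
  exact Finset.erase_subset _ _ hf

lemma IsMatchingSet.not_mem_of_mem {V : Type*} {G : SimpleGraph V} {M : Finset (Sym2 V)}
    (h : IsMatchingSet G M) {e f : Sym2 V} (he : e ∈ M) (hf : f ∈ M) (hne : e ≠ f)
    {v : V} (hv : v ∈ e) : v ∉ f :=
  h.2 he hf hne v hv

lemma key {K : Type*} [Field K] {V : Type*} {G : SimpleGraph V} (x : V) (k : ℕ)
    {d : V →₀ ℕ} (c : K) {M : Finset (Sym2 V)} (hM : IsMatchingSet G M) (hcard : M.card = k)
    (hle : ∑ e ∈ M, eDeg e ≤ d + Finsupp.single x 1) :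
    monomial d c ∈
      (⨆ y ∈ G.neighborSet x,
          Ideal.span {(X y : MvPolynomial V K)} * matchingPow K (delVerts G {x, y}) (k - 1)) +
        matchingPow K (delVerts G (insert x (G.neighborSet x))) k := by
  classical
  have hcomp : ∀ y (hy : y ∈ G.neighborSet x) (p : MvPolynomial V K),
      p ∈ Ideal.span {(X y : MvPolynomial V K)} * matchingPow K (delVerts G {x, y}) (k - 1) →
      p ∈ (⨆ y ∈ G.neighborSet x,
          Ideal.span {(X y : MvPolynomial V K)} * matchingPow K (delVerts G {x, y}) (k - 1)) +
        matchingPow K (delVerts G (insert x (G.neighborSet x))) k := by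
    intro y hy p hp
    refine Submodule.mem_sup_left ?_
    exact (le_iSup₂ (f := fun y (_ : y ∈ G.neighborSet x) =>
      Ideal.span {(X y : MvPolynomial V K)} * matchingPow K (delVerts G {x, y}) (k - 1)) y hy) hp
  have main : ∀ y, G.Adj x y → ∀ t s' : V →₀ ℕ,
      Finsupp.single y 1 + (t + s') ≤ d →
      monomial (t + s') (1 : K) ∈ matchingPow K (delVerts G {x, y}) (k - 1) →
      monomial d c ∈
      (⨆ y ∈ G.neighborSet x,
          Ideal.span {(X y : MvPolynomial V K)} * matchingPow K (delVerts G {x, y}) (k - 1)) +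
        matchingPow K (delVerts G (insert x (G.neighborSet x))) k := by
    intro y hadj t s' h1 hq
    have hsplit : monomial d c =
        monomial (d - (Finsupp.single y 1 + (t + s'))) c * (X y * monomial (t + s') 1) := by
      rw [X, monomial_mul, one_mul, monomial_mul, mul_one, tsub_add_cancel_of_le h1]
    refine hcomp y hadj _ ?_
    rw [hsplit]
    exact Ideal.mul_mem_left _ _ (Ideal.mul_mem_mul (Ideal.mem_span_singleton_self _) hq)
  by_cases hx : ∃ e ∈ M, x ∈ e
  · -- Case A : x is matched by M
    obtain ⟨e, he, hxe⟩ := hx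
    obtain ⟨y, rfl⟩ := Sym2.mem_iff_exists.1 hxe
    have hadj : G.Adj x y := (SimpleGraph.mem_edgeSet G).1 (hM.1 he)
    have hyx : y ≠ x := (G.ne_of_adj hadj).symm
    set M' := M.erase s(x, y) with hM'def
    have hxf : ∀ f ∈ M', x ∉ f := fun f hf =>
      hM.not_mem_of_mem he (Finset.mem_of_mem_erase hf) (Finset.ne_of_mem_erase hf).symm
        (Sym2.mem_mk_left _ _)
    have hyf : ∀ f ∈ M', y ∉ f := fun f hf =>
      hM.not_mem_of_mem he (Finset.mem_of_mem_erase hf) (Finset.ne_of_mem_erase hf).symm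
        (Sym2.mem_mk_right _ _)
    have hM' : IsMatchingSet (delVerts G {x, y}) M' := by
      rw [isMatchingSet_delVerts]
      refine ⟨hM.erase _, fun f hf w hw hwxy => ?_⟩
      rcases hwxy with rfl | rfl
      · exact hxf f hf hw
      · exact hyf f hf hw
    have hc' : M'.card = k - 1 := by rw [hM'def, Finset.card_erase_of_mem he, hcard]
    have hs'x : (∑ f ∈ M', eDeg f) x = 0 := by
      rw [Finset.sum_apply']
      exact Finset.sum_eq_zero fun f hf => eDeg_apply_of_not_mem (hxf f hf)
    have hsum : eDeg s(x, y) + ∑ f ∈ M', eDeg f = ∑ e ∈ M, eDeg e :=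
      Finset.add_sum_erase _ _ he
    have h1 : Finsupp.single y 1 + ((0 : V →₀ ℕ) + ∑ f ∈ M', eDeg f) ≤ d := by
      rw [zero_add, Finsupp.le_def]
      intro v
      have h2 := Finsupp.le_def.1 hle v
      rw [← hsum] at h2
      simp only [Finsupp.add_apply, eDeg_mk] at h2 ⊢
      by_cases hv : v = x
      · subst hv
        rw [hs'x, Finsupp.single_apply, if_neg hyx]
        exact Nat.zero_le _
      · have hx0 : (Finsupp.single x 1 : V →₀ ℕ) v = 0 := by
          rw [Finsupp.single_apply, if_neg (Ne.symm hv)]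
        rw [hx0] at h2
        omega
    refine main y hadj 0 _ h1 ?_
    rw [zero_add]
    exact Ideal.subset_span ⟨M', hM', hc', (prod_edgeProd M').symm⟩
  · -- Case B : x is not matched by M
    push_neg at hx
    have hle' : ∑ e ∈ M, eDeg e ≤ d := by
      rw [Finsupp.le_def]
      intro v
      by_cases hv : v = x
      · subst hv
        rw [Finset.sum_apply']
        rw [Finset.sum_eq_zero fun f hf => eDeg_apply_of_not_mem (hx f hf)]
        exact Nat.zero_le _
      · have h2 := Finsupp.le_def.1 hle v
        rwa [Finsupp.add_apply, Finsupp.single_apply, if_neg (Ne.symm hv), add_zero] at h2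
    by_cases hN : ∃ e ∈ M, ∃ y, y ∈ e ∧ G.Adj x y
    · -- Case B2 : some edge of M touches a neighbor of x
      obtain ⟨e, he, y, hye, hadj⟩ := hN
      obtain ⟨z, rfl⟩ := Sym2.mem_iff_exists.1 hye
      set M' := M.erase s(y, z) with hM'def
      have hyf : ∀ f ∈ M', y ∉ f := fun f hf =>
        hM.not_mem_of_mem he (Finset.mem_of_mem_erase hf) (Finset.ne_of_mem_erase hf).symm
          (Sym2.mem_mk_left _ _)
      have hM' : IsMatchingSet (delVerts G {x, y}) M' := by
        rw [isMatchingSet_delVerts]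
        refine ⟨hM.erase _, fun f hf w hw hwxy => ?_⟩
        rcases hwxy with rfl | rfl
        · exact hx f (Finset.mem_of_mem_erase hf) hw
        · exact hyf f hf hw
      have hc' : M'.card = k - 1 := by rw [hM'def, Finset.card_erase_of_mem he, hcard]
      have hsum : eDeg s(y, z) + ∑ f ∈ M', eDeg f = ∑ e ∈ M, eDeg e :=
        Finset.add_sum_erase _ _ he
      have h1 : Finsupp.single y 1 + (Finsupp.single z 1 + ∑ f ∈ M', eDeg f) ≤ d := by
        calc Finsupp.single y 1 + (Finsupp.single z 1 + ∑ f ∈ M', eDeg f)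
            = eDeg s(y, z) + ∑ f ∈ M', eDeg f := by rw [eDeg_mk, add_assoc]
          _ = ∑ e ∈ M, eDeg e := hsum
          _ ≤ d := hle'
      refine main y hadj (Finsupp.single z 1) _ h1 ?_
      have : monomial (Finsupp.single z 1 + ∑ f ∈ M', eDeg f) (1 : K) =
          X z * monomial (∑ f ∈ M', eDeg f) 1 := by
        rw [X, monomial_mul, one_mul]
      rw [this]
      exact Ideal.mul_mem_left _ _
        (Ideal.subset_span ⟨M', hM', hc', (prod_edgeProd M').symm⟩)
    · -- Case B1 : M is a matching of G minus the closed neighborhood of x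
      push_neg at hN
      have hMdel : IsMatchingSet (delVerts G (insert x (G.neighborSet x))) M := by
        rw [isMatchingSet_delVerts]
        refine ⟨hM, fun e he w hw hwN => ?_⟩
        rcases hwN with rfl | hwN
        · exact hx e he hw
        · exact hN e he w hw hwN
      have hsplit : monomial d c = monomial (d - ∑ e ∈ M, eDeg e) c *
          monomial (∑ e ∈ M, eDeg e) 1 := by
        rw [monomial_mul, mul_one, tsub_add_cancel_of_le hle']
      refine Submodule.mem_sup_right ?_
      rw [hsplit]
      exact Ideal.mul_mem_left _ _
        (Ideal.subset_span ⟨M, hMdel, hcard, (prod_edgeProd M).symm⟩)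

end Helpers

open Pointwise

/-- `(I(G)^{[k]} : x) = ∑_{y ∈ N_G(x)} y · I(G \ {x,y})^{[k-1]} + I(G \ N_G[x])^{[k]}`. -/
theorem matchingPow_colon_vertex {K : Type*} [Field K] {V : Type*} [Fintype V]
    (G : SimpleGraph V) (x : V) (k : ℕ) (hk1 : 2 ≤ k) (hk2 : k ≤ matchingNumber G) :
    Submodule.colon (matchingPow K G k) (Ideal.span {(X x : MvPolynomial V K)}) =
      (⨆ y ∈ G.neighborSet x,
          Ideal.span {(X y : MvPolynomial V K)} * matchingPow K (delVerts G {x, y}) (k - 1)) +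
        matchingPow K (delVerts G (insert x (G.neighborSet x))) k := by
    classical
  apply le_antisymm
  · -- hard direction
    intro f hf
    rw [← Ideal.submodule_span_eq, Submodule.mem_colon_span_singleton, smul_eq_mul,
      matchingPow_eq_span, mem_ideal_span_monomial_image] at hf
    rw [f.as_sum]
    apply Submodule.sum_mem
    intro dd hd
    have hmem : dd + Finsupp.single x 1 ∈ (f * X x).support := by
      rw [support_mul_X]
      exact Finset.mem_map.2 ⟨dd, hd, rfl⟩
    obtain ⟨sdeg, ⟨M, hM, hc, rfl⟩, hles⟩ := hf _ hmem
    exact key x k _ hM hc hles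
  · refine sup_le (iSup₂_le fun y hy => ?_) ?_
    · -- y - component
      have hadj : G.Adj x y := hy
      have hmul : Ideal.span {(X y : MvPolynomial V K)} *
          matchingPow K (delVerts G {x, y}) (k - 1) =
          Ideal.span ({(X y : MvPolynomial V K)} *
            {p | ∃ M : Finset (Sym2 V), IsMatchingSet (delVerts G {x, y}) M ∧ M.card = k - 1 ∧
              p = ∏ e ∈ M, edgeProd K e}) :=
        Ideal.span_mul_span' _ _
      rw [hmul, Ideal.span_le]
      rintro p ⟨a, ha, b, ⟨M, hM, hc, rfl⟩, rfl⟩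
      rw [Set.mem_singleton_iff] at ha
      subst ha
      show X y * (∏ e ∈ M, edgeProd K e) ∈ _
      rw [SetLike.mem_coe, ← Ideal.submodule_span_eq, Submodule.mem_colon_span_singleton,
        smul_eq_mul]
      obtain ⟨hMG, havoid⟩ := isMatchingSet_delVerts.1 hM
      have hxy_notin : s(x, y) ∉ M := fun hmem =>
        havoid _ hmem x (Sym2.mem_mk_left _ _) (Set.mem_insert _ _)
      have hins : IsMatchingSet G (insert s(x, y) M) := by
        constructor
        · rw [Finset.coe_insert]
          exact Set.insert_subset ((SimpleGraph.mem_edgeSet G).2 hadj) hMG.1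
        · rw [Finset.coe_insert]
          rw [Set.pairwise_insert]
          refine ⟨hMG.2, fun f hf _ => ⟨fun v hv hvf => ?_, fun v hv hvf => ?_⟩⟩
          · have := havoid f hf v hvf
            rcases Sym2.mem_iff.1 hv with rfl | rfl
            · exact this (Set.mem_insert _ _)
            · exact this (Set.mem_insert_of_mem _ rfl)
          · have := havoid f hf v hv
            rcases Sym2.mem_iff.1 hvf with rfl | rfl
            · exact this (Set.mem_insert _ _)
            · exact this (Set.mem_insert_of_mem _ rfl)
      have hcins : (insert s(x, y) M).card = k := by
        rw [Finset.card_insert_of_notMem hxy_notin, hc]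
        omega
      have hprod : X y * (∏ e ∈ M, edgeProd K e) * X x =
          ∏ e ∈ insert s(x, y) M, edgeProd K e := by
        rw [Finset.prod_insert hxy_notin]
        have : edgeProd K s(x, y) = X x * X y := Sym2.lift_mk _ _ _
        rw [this]
        ring
      rw [hprod]
      exact Ideal.subset_span ⟨insert s(x, y) M, hins, hcins, rfl⟩
    · -- last component
      refine Ideal.span_le.2 ?_
      rintro p ⟨M, hM, hc, rfl⟩
      rw [SetLike.mem_coe, ← Ideal.submodule_span_eq, Submodule.mem_colon_span_singleton,
        smul_eq_mul]
      exact Ideal.mul_mem_right _ _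
        (Ideal.subset_span ⟨M, (isMatchingSet_delVerts.1 hM).1, hc, rfl⟩)
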